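/- Let f : A → A be a continuous map of degree d with |d| > 1. Then f has at most |d − 1| Nielsen classes of fixed points: every set of fixed points of f that are pairwise not Nielsen equivalent has at most |d − 1| elements. -/

import Mathlib

open Set Filter Topology

noncomputable section

/-- The open annulus `A = S¹ × (0,1)`. -/
abbrev Ann : Type := Circle × (Set.Ioo (0:ℝ) 1)

/-- The universal cover `Ã = ℝ × (0,1)`. -/
abbrev AnnTil : Type := ℝ × (Set.Ioo (0:ℝ) 1)

/-- The covering projection `π(x,y) = (exp(2πix), y)`. -/
def pr : AnnTil → Ann := fun z => (Circle.exp (2 * Real.pi * z.1), z.2)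

/-- Translation by an integer in the first coordinate: `z + k`. -/
def tr (z : AnnTil) (k : ℤ) : AnnTil := (z.1 + k, z.2)

/-- `F` is a lift of `f`. -/
def IsLift (f : Ann → Ann) (F : AnnTil → AnnTil) : Prop :=
  Continuous F ∧ pr ∘ F = f ∘ pr

/-- `f` has degree `d`: some lift satisfies `F(z+1) = F(z) + d`. -/
def HasDegree (f : Ann → Ann) (d : ℤ) : Prop :=
  ∃ F : AnnTil → AnnTil, IsLift f F ∧ ∀ z, F (tr z 1) = tr (F z) d

/-- A subset of the annulus is essential if it is not contained in any
connected, simply connected open subset. -/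
def IsEssential (K : Set Ann) : Prop :=
  ¬ ∃ U : Set Ann, IsOpen U ∧ IsConnected U ∧ SimplyConnectedSpace U ∧ K ⊆ U

/-- Nielsen equivalence of fixed points `p`, `q` of `g`: there is a path `γ`
from `p` to `q` homotopic (rel endpoints) to `g ∘ γ`. -/
def NielsenEquiv (g : Ann → Ann) (p q : Ann) : Prop :=
  ∃ (hg : Continuous g) (hp : g p = p) (hq : g q = q) (γ : Path p q),
    γ.Homotopic ((γ.map hg).cast hp.symm hq.symm)

/-- `g` has exactly `N` Nielsen classes of fixed points. -/
def HasExactlyNielsenClasses (g : Ann → Ann) (N : ℕ) : Prop :=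
  ∃ S : Finset Ann, S.card = N ∧ (∀ p ∈ S, g p = p) ∧
    (∀ p ∈ S, ∀ q ∈ S, p ≠ q → ¬ NielsenEquiv g p q) ∧
    (∀ p, g p = p → ∃ q ∈ S, NielsenEquiv g p q)

/-- `Fill K`: the union of `K` with the connected components of its
complement whose closure is compact. -/
def Fill (K : Set Ann) : Set Ann :=
  K ∪ {x | x ∈ Kᶜ ∧ IsCompact (closure (connectedComponentIn Kᶜ x))}

lemma tr_tr (z : AnnTil) (a b : ℤ) : tr (tr z a) b = tr z (a + b) := by
  simp [tr, Prod.ext_iff]; push_cast; ring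

lemma tr_zero (z : AnnTil) : tr z 0 = z := by simp [tr]

lemma pr_tr (z : AnnTil) (k : ℤ) : pr (tr z k) = pr z := by
  simp only [pr, tr, Prod.mk.injEq]
  exact ⟨Circle.exp_eq_exp.2 ⟨k, by push_cast; ring⟩, trivial⟩

lemma pr_surjective : Function.Surjective pr := by
  intro p
  refine ⟨(Complex.arg p.1 / (2 * Real.pi), p.2), ?_⟩
  have h2π : (2 * Real.pi) ≠ 0 := by positivity
  simp only [pr, mul_div_cancel₀ _ h2π]
  exact Prod.ext (Circle.leftInverse_exp_arg p.1) rfl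

lemma pr_eq_iff {z w : AnnTil} (h : pr z = pr w) : ∃ m : ℤ, w = tr z m := by
  have h2π : (0:ℝ) < 2 * Real.pi := by positivity
  have h1 := congrArg Prod.fst h
  have h2 := congrArg Prod.snd h
  simp only [pr] at h1 h2
  obtain ⟨m, hm⟩ := Circle.exp_eq_exp.1 h1
  refine ⟨-m, ?_⟩
  have : z.1 = w.1 + m := by
    have := mul_left_cancel₀ (ne_of_gt h2π) (by linarith [hm] : 2 * Real.pi * z.1 = 2 * Real.pi * (w.1 + m))
    exact this
  refine Prod.ext ?_ h2.symm
  simp only [tr]; push_cast; linarith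

instance annTil_contractible : ContractibleSpace AnnTil := by
  have hconv : Convex ℝ ((Set.univ : Set ℝ) ×ˢ Set.Ioo (0:ℝ) 1) :=
    convex_univ.prod (convex_Ioo 0 1)
  have hne : ((Set.univ : Set ℝ) ×ˢ Set.Ioo (0:ℝ) 1).Nonempty :=
    ⟨(0, 1/2), trivial, by norm_num⟩
  have : ContractibleSpace ((Set.univ : Set ℝ) ×ˢ Set.Ioo (0:ℝ) 1 : Set (ℝ × ℝ)) :=
    hconv.contractibleSpace hne
  have e : ((Set.univ : Set ℝ) ×ˢ Set.Ioo (0:ℝ) 1 : Set (ℝ × ℝ)) ≃ₜ AnnTil :=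
    (Homeomorph.Set.prod _ _).trans
      ((Homeomorph.Set.univ ℝ).prodCongr (Homeomorph.refl _))
  exact e.symm.contractibleSpace

lemma continuous_pr : Continuous pr := by
  unfold pr
  fun_prop

lemma continuous_tr (k : ℤ) : Continuous (fun z => tr z k) := by
  unfold tr
  fun_prop

lemma F_tr {f F d} (hl : IsLift f F) (hdeg : ∀ z, F (tr z 1) = tr (F z) d)
    (z : AnnTil) (m : ℤ) : F (tr z m) = tr (F z) (m * d) := by
  induction m using Int.induction_on with
  | zero => simp [tr_zero]
  | succ n ih =>
    have : tr z ((n:ℤ) + 1) = tr (tr z n) 1 := by rw [tr_tr]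
    rw [this, hdeg, ih, tr_tr]
    ring_nf
  | pred n ih =>
    have h1 : tr (tr z (-(n:ℤ) - 1)) 1 = tr z (-(n:ℤ)) := by rw [tr_tr]; ring_nf
    have h2 : F (tr z (-(n:ℤ))) = tr (F (tr z (-(n:ℤ)-1))) d := by rw [← h1, hdeg]
    have := ih
    rw [h2] at this
    have h3 : F (tr z (-(n:ℤ)-1)) = tr (tr (F (tr z (-(n:ℤ)-1))) d) (-d) := by
      rw [tr_tr]; simp [tr_zero]
    rw [h3, this, tr_tr]
    ring_nf

lemma homotopic_cast {X : Type*} [TopologicalSpace X] {x y x' y' : X}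
    (hx : x' = x) (hy : y' = y) {p q : Path x y} (h : p.Homotopic q) :
    (p.cast hx hy).Homotopic (q.cast hx hy) := by
  subst hx; subst hy
  have hp : p.cast rfl rfl = p := Path.ext rfl
  have hq : q.cast rfl rfl = q := Path.ext rfl
  rwa [hp, hq]

lemma key_nielsen {f : Ann → Ann} {F : AnnTil → AnnTil} (hf : Continuous f)
    (hl : IsLift f F) {zp zq : AnnTil} {k : ℤ}
    (hp : F zp = tr zp k) (hq : F zq = tr zq k) :
    NielsenEquiv f (pr zp) (pr zq) := by
  have hcomm : ∀ z, pr (F z) = f (pr z) := fun z => congrFun hl.2 z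
  have hfp : f (pr zp) = pr zp := by rw [← hcomm, hp, pr_tr]
  have hfq : f (pr zq) = pr zq := by rw [← hcomm, hq, pr_tr]
  have e1 : pr zp = pr (F zp) := by rw [hcomm, hfp]
  have e2 : pr zq = pr (F zq) := by rw [hcomm, hfq]
  obtain ⟨Γ⟩ : Nonempty (Path zp zq) := ⟨PathConnectedSpace.somePath zp zq⟩
  set γ : Path (pr zp) (pr zq) := Γ.map continuous_pr with hγ
  set Γ' : Path (F zp) (F zq) := Γ.map hl.1 with hΓ'
  set Γ'' : Path (F zp) (F zq) := (Γ.map (continuous_tr k)).cast hp hq with hΓ''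
  have hhom : Γ'.Homotopic Γ'' :=
    (simply_connected_iff_paths_homotopic'.1 inferInstance).2 Γ' Γ''
  have hmap : (Γ'.map continuous_pr).Homotopic (Γ''.map continuous_pr) :=
    hhom.map ⟨pr, continuous_pr⟩
  have hcast := homotopic_cast e1 e2 hmap
  have hA : (Γ''.map continuous_pr).cast e1 e2 = γ := by
    apply Path.ext
    funext t
    simp only [Path.cast_coe, Path.map_coe, hΓ'', hγ, Function.comp_apply]
    exact pr_tr (Γ t) k
  have hB : (Γ'.map continuous_pr).cast e1 e2 = (γ.map hf).cast hfp.symm hfq.symm := by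
    apply Path.ext
    funext t
    simp only [Path.cast_coe, Path.map_coe, hΓ', hγ, Function.comp_apply]
    exact hcomm (Γ t)
  refine ⟨hf, hfp, hfq, γ, ?_⟩
  rw [← hB, ← hA]
  exact hcast.symm

/-- A degree-`d` (`|d|>1`) map of the annulus has at most `|d-1|` Nielsen
classes of fixed points. -/
theorem stmt_6 (f : Ann → Ann) (hf : Continuous f) (d : ℤ)
    (hdeg : HasDegree f d) (hd : 1 < |d|) :
    ∀ S : Finset Ann, (∀ p ∈ S, f p = p) →
      (∀ p ∈ S, ∀ q ∈ S, p ≠ q → ¬ NielsenEquiv f p q) →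
      S.card ≤ (d - 1).natAbs := by
  intro S hfix hnotNE
  obtain ⟨F, hl, hdF⟩ := hdeg
  set n : ℕ := (d - 1).natAbs with hn
  have hd1 : d ≠ 1 := by intro h; rw [h] at hd; simp at hd
  haveI : NeZero n := ⟨Int.natAbs_ne_zero.2 (sub_ne_zero.2 hd1)⟩
  have hcomm : ∀ z, pr (F z) = f (pr z) := fun z => congrFun hl.2 z
  choose lift hlift using pr_surjective
  have hkex : ∀ p : Ann, ∃ k : ℤ, f p = p → F (lift p) = tr (lift p) k := by
    intro p
    by_cases h : f p = p
    · have heq : pr (lift p) = pr (F (lift p)) := by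
        rw [hcomm, hlift, h]
      obtain ⟨m, hm⟩ := pr_eq_iff heq
      exact ⟨m, fun _ => hm⟩
    · exact ⟨0, fun hc => absurd hc h⟩
  choose k hk using hkex
  have hinj : Set.InjOn (fun p => ((k p : ZMod n))) S := by
    intro p hp q hq hpq
    by_contra hne
    refine hnotNE p hp q hq hne ?_
    simp only at hpq
    have hdvd : ((n : ℤ)) ∣ k p - k q :=
      Int.ModEq.dvd (Int.ModEq.symm ((ZMod.intCast_eq_intCast_iff' _ _ _).1 hpq))
    have hdvd2 : (d - 1) ∣ k p - k q := by
      rwa [hn, Int.natAbs_dvd] at hdvd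
    obtain ⟨m, hm⟩ := hdvd2
    have hFp : F (lift p) = tr (lift p) (k p) := hk p (hfix p hp)
    have hFq : F (lift q) = tr (lift q) (k q) := hk q (hfix q hq)
    have hFq' : F (tr (lift q) m) = tr (tr (lift q) m) (k p) := by
      rw [F_tr hl hdF, hFq, tr_tr, tr_tr]
      congr 1
      linarith [hm]
    have := key_nielsen hf hl hFp hFq'
    rwa [hlift, pr_tr, hlift] at this
  have hmem : ∀ p ∈ S, (fun p => ((k p : ZMod n))) p ∈ (Finset.univ : Finset (ZMod n)) :=
    fun p _ => Finset.mem_univ _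
  have hle := Finset.card_le_card_of_injOn _ hmem hinj
  simpa [ZMod.card] using hle
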